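/- For every t > 0 and every β ∈ (0,1), there exist constants A > 0, C > 0 and K > 0 such that for all x ∈ ℝ with |x| ≥ A: (1/√(2πt)) ∫_ℝ e^{−β|x+z|^{3/2} − √2 z − z²/(2t)} dz ≤ C e^{−β|x|^{3/2} + K|x|}. -/

import Mathlib

open Real MeasureTheory

lemma rpow_three_halves_eq (a : ℝ) (ha : 0 ≤ a) :
    a ^ ((3 : ℝ) / 2) = Real.sqrt a ^ 3 := by
  rw [Real.sqrt_eq_rpow, ← Real.rpow_natCast (a ^ ((1 : ℝ) / 2)) 3, ← Real.rpow_mul ha]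
  norm_num

lemma cube_lemma (s r d : ℝ) (hs : 0 ≤ s) (hr : 0 ≤ r) (hd : 0 ≤ d)
    (h : s ^ 2 - r ^ 2 ≤ d) : s ^ 3 ≤ r ^ 3 + 3 * d * s := by
  rcases le_or_gt s r with h' | h'
  · nlinarith [mul_nonneg hd hs, mul_nonneg (mul_nonneg hs hs) hs,
      mul_nonneg (mul_nonneg hr hr) hr, sq_nonneg (s - r), sq_nonneg (s + r)]
  · nlinarith [mul_nonneg (sq_nonneg (s - r)) (by linarith : (0 : ℝ) ≤ 2 * s + r),
      mul_nonneg (mul_nonneg hs hr) (by linarith : (0 : ℝ) ≤ s - r),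
      mul_nonneg hd hs, mul_le_mul_of_nonneg_right h hs]

/-- Laplace-method estimate from the proof of Proposition 4.2: for every `t > 0` and
`β ∈ (0,1)`, for `|x|` large enough,
`(1/√(2πt)) ∫ e^{−β|x+z|^{3/2} − √2 z − z²/(2t)} dz ≤ C e^{−β|x|^{3/2} + K|x|}`. -/
theorem laplace_method_estimate (t β : ℝ) (ht : 0 < t) (hβ : β ∈ Set.Ioo (0 : ℝ) 1) :
    ∃ A > (0 : ℝ), ∃ C > (0 : ℝ), ∃ K > (0 : ℝ), ∀ x : ℝ, A ≤ |x| →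
      (1 / Real.sqrt (2 * Real.pi * t)) *
          ∫ z : ℝ,
            Real.exp (-β * |x + z| ^ ((3 : ℝ) / 2) - Real.sqrt 2 * z - z ^ 2 / (2 * t))
        ≤ C * Real.exp (-β * |x| ^ ((3 : ℝ) / 2) + K * |x|) := by
  obtain ⟨hβ0, hβ1⟩ := hβ
  have hπ := Real.pi_pos
  have h2πt : 0 < 2 * Real.pi * t := by positivity
  refine ⟨1, one_pos, 2 * Real.exp (5 * t), by positivity, 9 * β ^ 2 * t, by positivity, ?_⟩
  intro x _
  set c : ℝ := -β * |x| ^ ((3 : ℝ) / 2) + (9 * β ^ 2 * t) * |x| + 5 * t with hc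
  -- Pointwise bound of the integrand by a Gaussian
  have hpt : ∀ z : ℝ,
      Real.exp (-β * |x + z| ^ ((3 : ℝ) / 2) - Real.sqrt 2 * z - z ^ 2 / (2 * t))
        ≤ Real.exp c * Real.exp (-(1 / (8 * t)) * z ^ 2) := by
    intro z
    rw [← Real.exp_add]
    apply Real.exp_le_exp.2
    have habs : |x| - |x + z| ≤ |z| := by
      have h := abs_sub_abs_le_abs_sub x (x + z)
      have : x - (x + z) = -z := by ring
      rw [this, abs_neg] at h
      exact h
    set u := Real.sqrt |x| with hu
    have hu2 : u ^ 2 = |x| := Real.sq_sqrt (abs_nonneg _)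
    have hun : 0 ≤ u := Real.sqrt_nonneg _
    have key : |x| ^ ((3 : ℝ) / 2) ≤ |x + z| ^ ((3 : ℝ) / 2) + 3 * |z| * u := by
      rw [rpow_three_halves_eq _ (abs_nonneg _), rpow_three_halves_eq _ (abs_nonneg _)]
      have h := cube_lemma (Real.sqrt |x|) (Real.sqrt |x + z|) |z|
        (Real.sqrt_nonneg _) (Real.sqrt_nonneg _) (abs_nonneg _)
        (by rw [Real.sq_sqrt (abs_nonneg _), Real.sq_sqrt (abs_nonneg _)]; exact habs)
      linarith
    have key' : β * |x| ^ ((3 : ℝ) / 2) ≤ β * |x + z| ^ ((3 : ℝ) / 2) + β * (3 * |z| * u) := by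
      nlinarith [mul_le_mul_of_nonneg_left key hβ0.le]
    have h1 : β * (3 * |z| * u) - 9 * β ^ 2 * t * |x| ≤ z ^ 2 / (4 * t) := by
      rw [← hu2, le_div_iff₀ (by linarith : (0 : ℝ) < 4 * t)]
      nlinarith [sq_nonneg (6 * β * t * u - |z|), sq_abs z, mul_pos ht ht]
    have h2 : Real.sqrt 2 * |z| - 5 * t ≤ z ^ 2 / (8 * t) := by
      have hs2 : Real.sqrt 2 ≤ 3 / 2 := by
        rw [show (3 : ℝ) / 2 = Real.sqrt ((3 / 2) ^ 2) by
          rw [Real.sqrt_sq (by norm_num : (0 : ℝ) ≤ 3 / 2)]]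
        exact Real.sqrt_le_sqrt (by norm_num)
      rw [le_div_iff₀ (by linarith : (0 : ℝ) < 8 * t)]
      nlinarith [sq_nonneg (|z| - 6 * t), sq_abs z,
        mul_le_mul_of_nonneg_right (mul_le_mul_of_nonneg_right hs2 (abs_nonneg z)) ht.le]
    have h3 : -(Real.sqrt 2 * z) ≤ Real.sqrt 2 * |z| := by
      have hz := neg_le_abs z
      nlinarith [Real.sqrt_nonneg 2]
    have hzz : z ^ 2 / (4 * t) + z ^ 2 / (8 * t) - z ^ 2 / (2 * t) = -(1 / (8 * t)) * z ^ 2 := by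
      field_simp
      ring
    rw [hc]
    linarith
  -- integrability
  have hg : Integrable (fun z : ℝ => Real.exp (-(1 / (8 * t)) * z ^ 2)) :=
    integrable_exp_neg_mul_sq (by positivity)
  have hg' : Integrable (fun z : ℝ => Real.exp c * Real.exp (-(1 / (8 * t)) * z ^ 2)) :=
    hg.const_mul _
  have hcont : Continuous fun z : ℝ =>
      Real.exp (-β * |x + z| ^ ((3 : ℝ) / 2) - Real.sqrt 2 * z - z ^ 2 / (2 * t)) := by
    apply Real.continuous_exp.comp
    apply Continuous.sub
    apply Continuous.sub
    · exact continuous_const.mul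
        (((continuous_const.add continuous_id).abs).rpow_const fun z => Or.inr (by norm_num))
    · exact continuous_const.mul continuous_id
    · exact (continuous_pow 2).div_const _
  have hf : Integrable (fun z : ℝ =>
      Real.exp (-β * |x + z| ^ ((3 : ℝ) / 2) - Real.sqrt 2 * z - z ^ 2 / (2 * t))) := by
    refine hg'.mono' hcont.aestronglyMeasurable (Filter.Eventually.of_forall fun z => ?_)
    rw [Real.norm_eq_abs, Real.abs_exp]
    exact hpt z
  have hint : (∫ z : ℝ,
      Real.exp (-β * |x + z| ^ ((3 : ℝ) / 2) - Real.sqrt 2 * z - z ^ 2 / (2 * t)))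
        ≤ ∫ z : ℝ, Real.exp c * Real.exp (-(1 / (8 * t)) * z ^ 2) :=
    integral_mono hf hg' hpt
  have hgauss : (∫ z : ℝ, Real.exp c * Real.exp (-(1 / (8 * t)) * z ^ 2))
      = Real.exp c * (2 * Real.sqrt (2 * Real.pi * t)) := by
    rw [integral_const_mul]
    congr 1
    have := integral_gaussian (1 / (8 * t))
    simp only [neg_mul] at this ⊢
    rw [this, show Real.pi / (1 / (8 * t)) = 2 ^ 2 * (2 * Real.pi * t) by field_simp; ring,
      Real.sqrt_mul (by norm_num) _, Real.sqrt_sq (by norm_num : (0 : ℝ) ≤ 2)]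
  have hs : Real.sqrt (2 * Real.pi * t) > 0 := Real.sqrt_pos.2 h2πt
  have hce : Real.exp c
      = Real.exp (-β * |x| ^ ((3 : ℝ) / 2) + 9 * β ^ 2 * t * |x|) * Real.exp (5 * t) := by
    rw [← Real.exp_add, hc]
  calc (1 / Real.sqrt (2 * Real.pi * t)) *
          ∫ z : ℝ,
            Real.exp (-β * |x + z| ^ ((3 : ℝ) / 2) - Real.sqrt 2 * z - z ^ 2 / (2 * t))
      ≤ (1 / Real.sqrt (2 * Real.pi * t)) *
          ∫ z : ℝ, Real.exp c * Real.exp (-(1 / (8 * t)) * z ^ 2) := by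
        apply mul_le_mul_of_nonneg_left hint (by positivity)
    _ = 2 * Real.exp c := by
        rw [hgauss]
        field_simp
    _ = 2 * Real.exp (5 * t) * Real.exp (-β * |x| ^ ((3 : ℝ) / 2) + 9 * β ^ 2 * t * |x|) := by
        rw [hce]; ring
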